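/- For every nonzero rational number r, coth(r) = cosh(r)/sinh(r) is irrational. -/

import Mathlib

noncomputable section CothIrrational

open intervalIntegral MeasureTheory.MeasureSpace Set Polynomial Real
open scoped Nat

namespace CothAux

/-- The sequence of integrals, analogous to Cartwright's proof for `π`. -/
def E (n : ℕ) (θ : ℝ) : ℝ := ∫ x in (-1)..1, (1 - x ^ 2) ^ n * cosh (x * θ)

variable {n : ℕ} {θ : ℝ}

lemma E_zero : E 0 θ * θ = 2 * sinh θ := by
  have h : ∫ x in (-1:ℝ)..1, cosh (x * θ) * θ = sinh (1 * θ) - sinh ((-1) * θ) := by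
    apply intervalIntegral.integral_eq_sub_of_hasDerivAt
      (f := fun x => sinh (x * θ)) (f' := fun x => cosh (x * θ) * θ)
    · exact fun x _ => (hasDerivAt_mul_const θ).sinh
    · exact Continuous.intervalIntegrable (by fun_prop) _ _
  rw [E]
  simp only [pow_zero, one_mul]
  rw [← intervalIntegral.integral_mul_const, h]
  rw [one_mul, neg_one_mul, sinh_neg]
  ring

lemma recursion' (n : ℕ) :
    E (n + 1) θ * θ ^ 2 = 2 * 2 * ((n + 1) * (0 ^ n * cosh θ)) -
      2 * (n + 1) * (2 * n + 1) * E n θ + 4 * (n + 1) * n * E (n - 1) θ := by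
  rw [E]
  let f (x : ℝ) : ℝ := 1 - x ^ 2
  let u₁ (x : ℝ) : ℝ := f x ^ (n + 1)
  let u₁' (x : ℝ) : ℝ := - (2 * (n + 1) * x * f x ^ n)
  let v₁ (x : ℝ) : ℝ := sinh (x * θ)
  let v₁' (x : ℝ) : ℝ := cosh (x * θ) * θ
  let u₂ (x : ℝ) : ℝ := x * (f x) ^ n
  let u₂' (x : ℝ) : ℝ := (f x) ^ n - 2 * n * x ^ 2 * (f x) ^ (n - 1)
  let v₂ (x : ℝ) : ℝ := cosh (x * θ)
  let v₂' (x : ℝ) : ℝ := sinh (x * θ) * θ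
  have hu₁d : Continuous u₁' := by fun_prop
  have hv₁d : Continuous v₁' := by fun_prop
  have hu₂d : Continuous u₂' := by fun_prop
  have hv₂d : Continuous v₂' := by fun_prop
  have hu₁_eval_one : u₁ 1 = 0 := by simp only [u₁, f]; simp
  have hu₁_eval_neg_one : u₁ (-1) = 0 := by simp only [u₁, f]; simp
  have t : u₂ 1 * v₂ 1 - u₂ (-1) * v₂ (-1) = 2 * (0 ^ n * cosh θ) := by
    simp [u₂, v₂, f, ← two_mul]
  have hf (x) : HasDerivAt f (- 2 * x) x := by
    refine ((hasDerivAt_pow 2 x).const_sub 1).congr_deriv ?_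
    simp
  have hu₁ (x) : HasDerivAt u₁ (u₁' x) x := by
    refine ((hf x).pow (n + 1)).congr_deriv ?_
    simp only [Nat.add_succ_sub_one, u₁', Nat.cast_add_one]
    ring
  have hv₁ (x) : HasDerivAt v₁ (v₁' x) x := (hasDerivAt_mul_const θ).sinh
  have hu₂ (x) : HasDerivAt u₂ (u₂' x) x := by
    refine ((hasDerivAt_id' x).mul ((hf x).pow n)).congr_deriv ?_
    simp only [u₂', Pi.pow_apply]
    ring
  have hv₂ (x) : HasDerivAt v₂ (v₂' x) x := (hasDerivAt_mul_const θ).cosh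
  convert_to (∫ (x : ℝ) in (-1)..1, u₁ x * v₁' x) * θ = _ using 1
  · simp_rw [u₁, f, v₁', ← intervalIntegral.integral_mul_const, sq θ, mul_assoc]
  rw [integral_mul_deriv_eq_deriv_mul (fun x _ => hu₁ x) (fun x _ => hv₁ x)
    (hu₁d.intervalIntegrable _ _) (hv₁d.intervalIntegrable _ _), hu₁_eval_one, hu₁_eval_neg_one,
    zero_mul, zero_mul, sub_zero, zero_sub, ← integral_neg, ← integral_mul_const]
  convert_to ((2 : ℝ) * (n + 1)) * ∫ (x : ℝ) in (-1)..1, (u₂ x * v₂' x) = _ using 1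
  · rw [← integral_const_mul]
    congr 1 with x
    dsimp [u₁', v₁, u₂, v₂']
    ring
  rw [integral_mul_deriv_eq_deriv_mul (fun x _ => hu₂ x) (fun x _ => hv₂ x)
    (hu₂d.intervalIntegrable _ _) (hv₂d.intervalIntegrable _ _), mul_sub, t]
  have this (x) : u₂' x = (2 * n + 1) * f x ^ n - 2 * n * f x ^ (n - 1) := by
    cases n with
    | zero => simp [u₂']
    | succ n => ring!
  simp_rw [this, sub_mul, mul_assoc _ _ (v₂ _)]
  have : Continuous v₂ := by fun_prop
  rw [mul_mul_mul_comm, integral_sub, mul_sub]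
  · simp_rw [integral_const_mul]
    ring!
  all_goals exact Continuous.intervalIntegrable (by fun_prop) _ _

lemma recursion (n : ℕ) :
    E (n + 2) θ * θ ^ 2 =
      -(2 * (n + 2) * (2 * n + 3)) * E (n + 1) θ + 4 * (n + 2) * (n + 1) * E n θ := by
  rw [recursion' (n + 1)]
  simp
  ring!

lemma E_one : E 1 θ * θ ^ 3 = 4 * θ * cosh θ - 4 * sinh θ := by
  rw [_root_.pow_succ, ← mul_assoc, recursion' 0, add_mul, sub_mul, mul_assoc _ (E 0 θ), E_zero]
  push_cast
  ring

/-- Coefficient polynomial of `sinh`. -/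
def shPoly : ℕ → ℤ[X]
  | 0 => C 2
  | 1 => C (-4)
  | (n+2) => ((-2 : ℤ) * (2 * n + 3)) • shPoly (n + 1) + monomial 2 4 * shPoly n

/-- Coefficient polynomial of `cosh`. -/
def chPoly : ℕ → ℤ[X]
  | 0 => 0
  | 1 => monomial 1 4
  | (n+2) => ((-2 : ℤ) * (2 * n + 3)) • chPoly (n + 1) + monomial 2 4 * chPoly n

lemma shPoly_natDegree_le : ∀ n : ℕ, (shPoly n).natDegree ≤ n
  | 0 => by simp [shPoly]
  | 1 => by simp only [natDegree_C, mul_one, zero_le', shPoly]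
  | n + 2 => by
      rw [shPoly]
      refine natDegree_add_le_of_degree_le ((natDegree_smul_le _ _).trans ?_) ?_
      · exact (shPoly_natDegree_le (n + 1)).trans (by simp)
      refine natDegree_mul_le.trans ?_
      simpa [add_comm 2] using shPoly_natDegree_le n

lemma chPoly_natDegree_le : ∀ n : ℕ, (chPoly n).natDegree ≤ n
  | 0 => by simp [chPoly]
  | 1 => (natDegree_monomial_le _).trans (by simp)
  | n + 2 => by
      rw [chPoly]
      refine natDegree_add_le_of_degree_le ((natDegree_smul_le _ _).trans ?_) ?_
      · exact (chPoly_natDegree_le (n + 1)).trans (by simp)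
      exact natDegree_mul_le.trans (by simp [add_comm 2, chPoly_natDegree_le n])

lemma shPoly_add_chPoly_eval (θ : ℝ) :
    ∀ n : ℕ,
      E n θ * θ ^ (2 * n + 1) = n ! * ((shPoly n).eval₂ (Int.castRingHom _) θ * sinh θ +
        (chPoly n).eval₂ (Int.castRingHom _) θ * cosh θ)
  | 0 => by simp [shPoly, chPoly, E_zero]
  | 1 => by
      rw [show 2 * 1 + 1 = 3 from rfl, E_one, shPoly, chPoly, eval₂_monomial, eval₂_C]
      simp only [eq_intCast, Nat.factorial_one, Nat.cast_one]
      push_cast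
      ring
  | n + 2 => by
      calc E (n + 2) θ * θ ^ (2 * (n + 2) + 1) = E (n + 2) θ * θ ^ 2 * θ ^ (2 * n + 3) := by ring
        _ = -(2 * (n + 2) * (2 * n + 3)) * (E (n + 1) θ * θ ^ (2 * (n + 1) + 1)) +
            4 * (n + 2) * (n + 1) * θ ^ 2 * (E n θ * θ ^ (2 * n + 1)) := by rw [recursion]; ring
        _ = _ := by
            simp [shPoly_add_chPoly_eval, shPoly, chPoly, Nat.factorial_succ]
            ring

lemma is_integer {p : ℤ[X]} (a b : ℤ) {k : ℕ} (hp : p.natDegree ≤ k) :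
    ∃ z : ℤ, p.eval₂ (Int.castRingHom ℝ) (a / b) * b ^ k = z := by
  rcases eq_or_ne b 0 with rfl | hb
  · rcases k.eq_zero_or_pos with rfl | hk
    · exact ⟨p.coeff 0, by simp⟩
    exact ⟨0, by simp [hk.ne']⟩
  refine ⟨∑ i ∈ p.support, p.coeff i * a ^ i * b ^ (k - i), ?_⟩
  conv => lhs; rw [← sum_monomial_eq p]
  rw [eval₂_sum, sum, Finset.sum_mul, Int.cast_sum]
  simp only [eval₂_monomial, eq_intCast, div_pow, Int.cast_mul, Int.cast_pow]
  refine Finset.sum_congr rfl (fun i hi => ?_)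
  have ik := (le_natDegree_of_mem_supp i hi).trans hp
  rw [mul_assoc, div_mul_comm, ← Int.cast_pow, ← Int.cast_pow, ← Int.cast_pow,
    ← pow_sub_mul_pow b ik, ← Int.cast_div_charZero, Int.mul_ediv_cancel _ (pow_ne_zero _ hb),
    ← mul_assoc, mul_right_comm, ← Int.cast_pow]
  exact dvd_mul_left _ _

open Filter

lemma E_pos : 0 < E n θ := by
  refine integral_pos (by norm_num) (Continuous.continuousOn (by continuity)) ?_ ⟨0, by simp⟩
  intro x hx
  refine mul_nonneg (pow_nonneg ?_ _) (cosh_pos _).le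
  nlinarith [hx.1, hx.2]

lemma E_le (n : ℕ) : E n θ ≤ 2 * cosh θ := by
  have key : ∀ x ∈ uIoc (-1 : ℝ) 1, ‖(1 - x ^ 2) ^ n * cosh (x * θ)‖ ≤ cosh θ := by
    intro x hx
    simp only [uIoc_of_le, neg_le_self_iff, zero_le_one, mem_Ioc] at hx
    rw [norm_eq_abs, abs_mul, abs_pow]
    calc |1 - x ^ 2| ^ n * |cosh (x * θ)| ≤ 1 * cosh θ := by
          refine mul_le_mul (pow_le_one₀ (abs_nonneg _) ?_) ?_ (abs_nonneg _) zero_le_one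
          · rw [abs_le]; constructor <;> nlinarith [hx.1, hx.2]
          · rw [_root_.abs_of_pos (cosh_pos _), Real.cosh_le_cosh, abs_mul]
            calc |x| * |θ| ≤ 1 * |θ| := by
                  refine mul_le_mul_of_nonneg_right ?_ (abs_nonneg _)
                  rw [abs_le]; exact ⟨by linarith [hx.1], hx.2⟩
              _ = |θ| := one_mul _
      _ = cosh θ := one_mul _
  have := norm_integral_le_of_norm_le_const key
  rw [← norm_of_nonneg (E_pos (n := n) (θ := θ)).le]
  refine this.trans ?_
  rw [show (1 : ℝ) - (-1) = 2 by norm_num, abs_two]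
  linarith [cosh_pos θ]

lemma tendsto_pow_div_factorial_at_top_aux (a : ℝ) :
    Tendsto (fun n => (a : ℝ) ^ (2 * n + 1) / n !) atTop (nhds 0) := by
  rw [← mul_zero a]
  refine ((FloorSemiring.tendsto_pow_div_factorial_atTop (a ^ 2)).const_mul a).congr (fun x => ?_)
  rw [← pow_mul, mul_div_assoc', _root_.pow_succ']

lemma coth_pos_rat_irrational (r : ℚ) (hr : 0 < r) :
    Irrational (Real.cosh (r : ℝ) / Real.sinh (r : ℝ)) := by
  set θ : ℝ := (r : ℝ) with hθ
  have hθpos : 0 < θ := by rw [hθ]; exact_mod_cast hr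
  have hsinh : 0 < sinh θ := sinh_pos_iff.2 hθpos
  have hcoshpos : 0 < cosh θ := cosh_pos θ
  rw [Irrational]
  rintro ⟨c, hc⟩
  rw [eq_div_iff hsinh.ne'] at hc
  have hcosh : cosh θ = (c : ℝ) * sinh θ := hc.symm
  have hdenpos : (0 : ℝ) < (c.den : ℝ) := by exact_mod_cast c.pos
  obtain ⟨a, b, hbpos, hab⟩ : ∃ (a : ℤ) (b : ℕ), 0 < b ∧ θ = a / b :=
    ⟨r.num, r.den, r.pos, by rw [hθ, Rat.cast_def]⟩
  have hbR : (0 : ℝ) < (b : ℝ) := by exact_mod_cast hbpos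
  have hapos : (0 : ℝ) < a := by
    have : 0 < (a : ℝ) / b := hab ▸ hθpos
    rwa [lt_div_iff₀ (by positivity), zero_mul] at this
  have j : ∀ᶠ n : ℕ in atTop,
      (c.den : ℝ) * ((a : ℝ) ^ (2 * n + 1)) * (2 * cosh θ) < n ! * sinh θ := by
    have hK : (0 : ℝ) < sinh θ / ((c.den : ℝ) * (2 * cosh θ)) := by positivity
    filter_upwards [(tendsto_pow_div_factorial_at_top_aux a).eventually_lt_const hK] with n hn
    have h := (div_lt_div_iff₀ (by positivity) (by positivity)).mp hn
    have h' : (c.den : ℝ) * ((a : ℝ) ^ (2 * n + 1)) * (2 * cosh θ) =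
        (a : ℝ) ^ (2 * n + 1) * ((c.den : ℝ) * (2 * cosh θ)) := by ring
    rw [h']
    linarith [h]
  obtain ⟨n, hn⟩ := j.exists
  obtain ⟨z₁, hz₁⟩ := is_integer (p := shPoly n) (k := 2 * n + 1) a b ((shPoly_natDegree_le n).trans (by linarith))
  obtain ⟨z₂, hz₂⟩ := is_integer (p := chPoly n) (k := 2 * n + 1) a b ((chPoly_natDegree_le n).trans (by linarith))
  push_cast at hz₁ hz₂
  rw [← hab] at hz₁ hz₂
  have e := shPoly_add_chPoly_eval θ n
  rw [hcosh] at e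
  have hfacpos : (0 : ℝ) < (n ! : ℝ) := by exact_mod_cast n.factorial_pos
  have hcnum : (c.num : ℝ) = (c : ℝ) * (c.den : ℝ) := by
    rw [Rat.cast_def]; field_simp
  have hup : (a : ℝ) ^ (2 * n + 1) = θ ^ (2 * n + 1) * (b : ℝ) ^ (2 * n + 1) := by
    rw [← mul_pow, hab, div_mul_cancel₀ _ hbR.ne']
  set z : ℤ := c.den * z₁ + c.num * z₂ with hz
  have key : (z : ℝ) * (n ! * sinh θ) = (c.den : ℝ) * ((a : ℝ) ^ (2 * n + 1) * E n θ) := by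
    push_cast [hz]
    rw [hcnum, ← hz₁, ← hz₂, hup]
    linear_combination (-(c.den : ℝ) * (b : ℝ) ^ (2 * n + 1)) * e
  have hEpos : 0 < E n θ := E_pos
  have hF : (0 : ℝ) < (n ! : ℝ) * sinh θ := by positivity
  have hzpos : (0 : ℝ) < z := by
    have h2 : (0 : ℝ) * ((n ! : ℝ) * sinh θ) < (z : ℝ) * ((n ! : ℝ) * sinh θ) := by
      rw [zero_mul, key]; positivity
    exact lt_of_mul_lt_mul_right h2 hF.le
  have hzlt : (z : ℝ) < 1 := by
    have hle : E n θ ≤ 2 * cosh θ := E_le n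
    have h2 : (z : ℝ) * ((n ! : ℝ) * sinh θ) < 1 * ((n ! : ℝ) * sinh θ) := by
      rw [key, one_mul]
      have hmul := mul_le_mul_of_nonneg_left hle
        (show (0 : ℝ) ≤ (c.den : ℝ) * (a : ℝ) ^ (2 * n + 1) by positivity)
      nlinarith [hn, hmul]
    exact lt_of_mul_lt_mul_right h2 hF.le
  have hp : (0 : ℤ) < z := by exact_mod_cast hzpos
  have hl : z < 1 := by exact_mod_cast hzlt
  omega

end CothAux

end CothIrrational

theorem coth_nonzero_rat_irrational (r : ℚ) (hr : r ≠ 0) :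
    Irrational (Real.cosh (r : ℝ) / Real.sinh (r : ℝ)) := by
  rcases lt_or_gt_of_ne hr with h | h
  · have := CothAux.coth_pos_rat_irrational (-r) (by linarith)
    push_cast at this
    rw [Real.cosh_neg, Real.sinh_neg] at this
    simpa [div_neg] using this.neg
  · exact CothAux.coth_pos_rat_irrational r h
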